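/- The map φ sending every binary forest with n leaves to X^n extends to a surjective morphism of Hopf algebras from the Hopf algebra H of binary forests to the binomial Hopf algebra k[X] with Δ(X) = X⊗1 + 1⊗X; in particular φ(Δ_H(F)) = Δ_{k[X]}(X^n) for every forest F with n leaves. -/

import Mathlib

/-- Full binary rooted trees. -/
inductive BTree : Type
  | leaf : BTree
  | node : BTree → BTree → BTree
  deriving DecidableEq

namespace BTree

def leafCount : BTree → ℕ
  | leaf => 1
  | node l r => leafCount l + leafCount r

def leafPos : BTree → List (List Bool)
  | leaf => [[]]
  | node l r => (leafPos l).map (List.cons false) ++ (leafPos r).map (List.cons true)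

/-- The pruned forest `F_A` of the cut given by the leaf subset `A`. -/
def maxSub (p : List Bool → Bool) : BTree → List Bool → List BTree
  | leaf, q => if p q then [leaf] else []
  | node l r, q =>
      if (leafPos (node l r)).all (fun s => p (q ++ s)) then [node l r]
      else maxSub p l (q ++ [false]) ++ maxSub p r (q ++ [true])

/-- The remainder `T/A`, contracted back to a full binary tree. -/
def quotA (p : List Bool → Bool) : BTree → List Bool → Option BTree
  | leaf, q => if p q then none else some leaf
  | node l r, q =>
      match quotA p l (q ++ [false]), quotA p r (q ++ [true]) with
      | some l', some r' => some (node l' r')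
      | some l', none => some l'
      | none, some r' => some r'
      | none, none => none

end BTree

noncomputable section
open scoped TensorProduct

/-- The Hopf algebra `H` of binary forests. -/
abbrev V : Type := AddMonoidAlgebra ℚ (Multiset BTree)

noncomputable def fδ (m : Multiset BTree) : V := AddMonoidAlgebra.single m 1

def optForest : Option BTree → Multiset BTree
  | none => 0
  | some t => {t}

/-- Coproduct of a tree: `Δ(T) = Σ_{A ⊆ L(T)} F_A ⊗ T/A`, indexed by subsets
of leaves (equivalently, binary-admissible cuts plus the total cut). -/
noncomputable def treeDelta (T : BTree) : V ⊗[ℚ] V :=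
  ∑ A ∈ (BTree.leafPos T).toFinset.powerset,
    fδ ↑(BTree.maxSub (fun q => decide (q ∈ A)) T []) ⊗ₜ[ℚ]
      fδ (optForest (BTree.quotA (fun q => decide (q ∈ A)) T []))

/-- Coproduct of a forest: multiplicative extension of `treeDelta`. -/
noncomputable def forestDelta (m : Multiset BTree) : V ⊗[ℚ] V :=
  (m.map treeDelta).prod

/-- The coproduct `Δ_H : H → H ⊗ H` as a linear map. -/
noncomputable def ΔH : V →ₗ[ℚ] V ⊗[ℚ] V :=
  Finsupp.lift (V ⊗[ℚ] V) ℚ (Multiset BTree) forestDelta ∘ₗ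
    (AddMonoidAlgebra.coeffLinearEquiv ℚ).toLinearMap

/-- Number of leaves of a forest. -/
def forestLeafCount (m : Multiset BTree) : ℕ := (m.map BTree.leafCount).sum

/-- The map sending a forest with `n` leaves to `X^n`, extended linearly. -/
noncomputable def φ : V →ₗ[ℚ] Polynomial ℚ :=
  Finsupp.lift (Polynomial ℚ) ℚ (Multiset BTree)
    (fun m => Polynomial.X ^ forestLeafCount m) ∘ₗ
    (AddMonoidAlgebra.coeffLinearEquiv ℚ).toLinearMap

/-- The binomial (Hopf-algebra) coproduct on `ℚ[X]`, determined by
`Δ(X) = X ⊗ 1 + 1 ⊗ X`. -/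
noncomputable def Δpoly : Polynomial ℚ →ₐ[ℚ] Polynomial ℚ ⊗[ℚ] Polynomial ℚ :=
  Polynomial.aeval
    ((Polynomial.X ⊗ₜ[ℚ] 1 + 1 ⊗ₜ[ℚ] Polynomial.X) :
      Polynomial ℚ ⊗[ℚ] Polynomial ℚ)

/-- The counit of `H` (1 on the empty forest, 0 on nonempty forests). -/
noncomputable def εH : V →ₗ[ℚ] ℚ :=
  Finsupp.lift ℚ ℚ (Multiset BTree) (fun m => if m = 0 then 1 else 0) ∘ₗ
    (AddMonoidAlgebra.coeffLinearEquiv ℚ).toLinearMap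


/-! ### Auxiliary lemmas -/

namespace BTree

lemma leafCount_pos (T : BTree) : 0 < T.leafCount := by
  induction T with
  | leaf => simp [leafCount]
  | node l r ihl ihr => simp [leafCount]; omega

lemma length_leafPos (T : BTree) : (leafPos T).length = T.leafCount := by
  induction T with
  | leaf => rfl
  | node l r ihl ihr => simp [leafPos, leafCount, ihl, ihr]

lemma nodup_leafPos (T : BTree) : (leafPos T).Nodup := by
  induction T with
  | leaf => simp [leafPos]
  | node l r ihl ihr =>
    refine List.Nodup.append ((ihl.map ?_)) (ihr.map ?_) ?_
    · exact fun a b h => by simpa using h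
    · exact fun a b h => by simpa using h
    · intro x hx hy
      simp only [List.mem_map] at hx hy
      obtain ⟨a, -, rfl⟩ := hx
      obtain ⟨b, -, hb⟩ := hy
      simpa using hb.symm

lemma forestLeafCount_coe (l : List BTree) :
    forestLeafCount ↑l = (l.map leafCount).sum := by
  simp [forestLeafCount]

lemma maxSub_count (p : List Bool → Bool) (T : BTree) (q : List Bool) :
    forestLeafCount ↑(maxSub p T q) = ((leafPos T).filter (fun s => p (q ++ s))).length := by
  induction T generalizing q with
  | leaf =>
    by_cases h : p (q ++ []) = true
    · simp [maxSub, leafPos, forestLeafCount_coe, h, List.append_nil] at h ⊢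
      simp [h, leafCount]
    · simp only [List.append_nil] at h
      simp [maxSub, leafPos, forestLeafCount_coe, h]
      rfl
  | node l r ihl ihr =>
    by_cases h : (leafPos (node l r)).all (fun s => p (q ++ s))
    · rw [maxSub, if_pos h]
      rw [List.all_eq_true] at h
      rw [List.filter_eq_self.2 (by intro a ha; exact h a ha)]
      simp [forestLeafCount, length_leafPos]
    · rw [maxSub, if_neg h]
      simp only [leafPos, List.filter_append, List.length_append]
      rw [forestLeafCount_coe, List.map_append, List.sum_append,
        ← forestLeafCount_coe, ← forestLeafCount_coe, ihl, ihr]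
      congr 1
      · rw [List.filter_map, List.length_map]
        congr 1
        apply List.filter_congr
        intro a _; simp [Function.comp]
      · rw [List.filter_map, List.length_map]
        congr 1
        apply List.filter_congr
        intro a _; simp [Function.comp]

lemma quotA_count (p : List Bool → Bool) (T : BTree) (q : List Bool) :
    forestLeafCount (optForest (quotA p T q))
      = ((leafPos T).filter (fun s => ! p (q ++ s))).length := by
  induction T generalizing q with
  | leaf =>
    by_cases h : p (q ++ []) = true
    · simp only [List.append_nil] at h
      simp [quotA, leafPos, optForest, forestLeafCount, h]
    · simp only [List.append_nil] at h
      simp only [Bool.not_eq_true] at h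
      simp [quotA, leafPos, optForest, forestLeafCount, leafCount, h]
  | node l r ihl ihr =>
    have hl := ihl (q ++ [false])
    have hr := ihr (q ++ [true])
    have key : forestLeafCount (optForest (quotA p (node l r) q)) =
        forestLeafCount (optForest (quotA p l (q ++ [false]))) +
        forestLeafCount (optForest (quotA p r (q ++ [true]))) := by
      rw [quotA]
      rcases h1 : quotA p l (q ++ [false]) with _ | l' <;>
        rcases h2 : quotA p r (q ++ [true]) with _ | r' <;>
        simp [optForest, forestLeafCount, leafCount]
    rw [key, hl, hr]
    simp only [leafPos, List.filter_append, List.length_append]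
    congr 1
    · rw [List.filter_map, List.length_map]
      congr 1
      apply List.filter_congr
      intro a _; simp [Function.comp]
    · rw [List.filter_map, List.length_map]
      congr 1
      apply List.filter_congr
      intro a _; simp [Function.comp]

end BTree

lemma forestLeafCount_add (a b : Multiset BTree) :
    forestLeafCount (a + b) = forestLeafCount a + forestLeafCount b := by
  simp [forestLeafCount]

lemma forestLeafCount_eq_zero {m : Multiset BTree} :
    forestLeafCount m = 0 ↔ m = 0 := by
  constructor
  · intro h
    by_contra hm
    obtain ⟨T, hT⟩ := Multiset.exists_mem_of_ne_zero hm
    have h1 : T.leafCount ≤ forestLeafCount m :=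
      Multiset.single_le_sum (by simp) _ (Multiset.mem_map_of_mem _ hT)
    have h2 := BTree.leafCount_pos T
    omega
  · rintro rfl; simp [forestLeafCount]

noncomputable def φA : V →ₐ[ℚ] Polynomial ℚ :=
  AddMonoidAlgebra.lift ℚ (Polynomial ℚ) (Multiset BTree)
    { toFun := fun m => Polynomial.X ^ forestLeafCount (Multiplicative.toAdd m)
      map_one' := by simp [forestLeafCount]
      map_mul' := fun a b => by
        simp only [toAdd_mul, forestLeafCount_add, pow_add] }

lemma φ_single (m : Multiset BTree) (b : ℚ) :
    φ (AddMonoidAlgebra.single m b) = b • Polynomial.X ^ forestLeafCount m := by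
  change (Finsupp.lift (Polynomial ℚ) ℚ (Multiset BTree)
    (fun m => Polynomial.X ^ forestLeafCount m)) (Finsupp.single m b) = _
  erw [Finsupp.lift_apply, Finsupp.sum_single_index (by simp)]

lemma φ_fδ' (m : Multiset BTree) :
    φ (fδ m) = Polynomial.X ^ forestLeafCount m := by
  rw [fδ, φ_single, one_smul]

lemma φ_eq : φ = φA.toLinearMap := by
  refine AddMonoidAlgebra.lhom_ext' fun m => LinearMap.ext fun b => ?_
  simp only [LinearMap.coe_comp, Function.comp_apply, AddMonoidAlgebra.lsingle_apply]
  erw [φ_single]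
  show _ = φA (AddMonoidAlgebra.single m b)
  erw [AddMonoidAlgebra.lift_single]
  rfl

lemma map_φφ_eq :
    TensorProduct.map φ φ = (Algebra.TensorProduct.map φA φA).toLinearMap := by
  apply TensorProduct.ext'
  intro a b
  simp [φ_eq, Algebra.TensorProduct.map_tmul]

lemma map_treeDelta (T : BTree) :
    TensorProduct.map φ φ (treeDelta T)
      = (Polynomial.X ⊗ₜ[ℚ] 1 + 1 ⊗ₜ[ℚ] Polynomial.X) ^ T.leafCount := by
  classical
  have hcard : (BTree.leafPos T).toFinset.card = T.leafCount := by
    rw [List.toFinset_card_of_nodup (BTree.nodup_leafPos T), BTree.length_leafPos]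
  unfold treeDelta
  rw [map_sum]
  have hrhs : (Polynomial.X ⊗ₜ[ℚ] (1 : Polynomial ℚ)
        + (1 : Polynomial ℚ) ⊗ₜ[ℚ] Polynomial.X) ^ T.leafCount
      = ∑ A ∈ (BTree.leafPos T).toFinset.powerset,
          (Polynomial.X ^ A.card) ⊗ₜ[ℚ]
            (Polynomial.X ^ ((BTree.leafPos T).toFinset.card - A.card)) := by
    rw [← hcard, ← Finset.prod_const, Finset.prod_add]
    refine Finset.sum_congr rfl fun A hA => ?_
    rw [Finset.prod_const, Finset.prod_const,
      Finset.card_sdiff_of_subset (Finset.mem_powerset.1 hA),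
      Algebra.TensorProduct.tmul_pow, Algebra.TensorProduct.tmul_pow,
      Algebra.TensorProduct.tmul_mul_tmul, one_pow, one_pow, mul_one, one_mul]
  rw [hrhs]
  refine Finset.sum_congr rfl fun A hA => ?_
  have hsub : A ⊆ (BTree.leafPos T).toFinset := Finset.mem_powerset.1 hA
  erw [TensorProduct.map_tmul, φ_fδ', φ_fδ', BTree.maxSub_count, BTree.quotA_count]
  have hfilA : ((BTree.leafPos T).filter
      (fun s => decide (([] : List Bool) ++ s ∈ A))).length = A.card := by
    have hnod : ((BTree.leafPos T).filter
        (fun s => decide (([] : List Bool) ++ s ∈ A))).Nodup :=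
      (BTree.nodup_leafPos T).filter _
    rw [← List.toFinset_card_of_nodup hnod, List.toFinset_filter]
    have heq : (BTree.leafPos T).toFinset.filter
        (fun s => decide (([] : List Bool) ++ s ∈ A)) = A := by
      ext x
      simp only [Finset.mem_filter, List.nil_append, decide_eq_true_eq]
      exact ⟨fun h => h.2, fun h => ⟨hsub h, h⟩⟩
    rw [heq]
  have htot := List.length_eq_length_filter_add (l := BTree.leafPos T)
    (fun s => decide (([] : List Bool) ++ s ∈ A))
  have hfilB : ((BTree.leafPos T).filter
      (fun s => ! decide (([] : List Bool) ++ s ∈ A))).length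
      = (BTree.leafPos T).toFinset.card - A.card := by
    rw [BTree.length_leafPos] at htot
    rw [hcard]
    omega
  rw [hfilA, hfilB]

lemma map_forestDelta (m : Multiset BTree) :
    TensorProduct.map φ φ (forestDelta m)
      = (Polynomial.X ⊗ₜ[ℚ] 1 + 1 ⊗ₜ[ℚ] Polynomial.X) ^ forestLeafCount m := by
  induction m using Multiset.induction with
  | empty =>
    have h0 : forestLeafCount 0 = 0 := by simp [forestLeafCount]
    have h1 : forestDelta 0 = 1 := by
      simp [forestDelta]
    rw [h1, h0, pow_zero, map_φφ_eq]
    exact map_one (Algebra.TensorProduct.map φA φA)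
  | cons T m ih =>
    have h1 : forestDelta (T ::ₘ m) = treeDelta T * forestDelta m := by
      simp only [forestDelta, Multiset.map_cons, Multiset.prod_cons]
    have h2 : forestLeafCount (T ::ₘ m) = T.leafCount + forestLeafCount m := by
      simp [forestLeafCount]
    rw [h1, h2, pow_add, ← map_treeDelta T, ← ih, map_φφ_eq]
    exact map_mul (Algebra.TensorProduct.map φA φA) _ _

lemma Δpoly_pow (n : ℕ) :
    Δpoly (Polynomial.X ^ n)
      = (Polynomial.X ⊗ₜ[ℚ] 1 + 1 ⊗ₜ[ℚ] Polynomial.X) ^ n := by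
  rw [map_pow]
  congr 1
  exact Polynomial.aeval_X _

/-- The map sending every binary forest with `n` leaves to `X^n` is a
surjective morphism of Hopf algebras `H → ℚ[X]`: it is a surjective algebra
map compatible with the coproducts (and counits); in particular
`(φ ⊗ φ)(Δ_H F) = Δ_{ℚ[X]}(X^n)` for every forest `F` with `n` leaves. -/
theorem leafCount_hopf_morphism :
    Function.Surjective φ ∧
    φ 1 = 1 ∧
    (∀ x y : V, φ (x * y) = φ x * φ y) ∧
    (∀ x : V, TensorProduct.map φ φ (ΔH x) = Δpoly (φ x)) ∧
    (∀ x : V, Polynomial.eval 0 (φ x) = εH x) ∧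
    (∀ F : Multiset BTree, φ (fδ F) = Polynomial.X ^ forestLeafCount F) := by
  refine ⟨?_, ?_, ?_, ?_, ?_, φ_fδ'⟩
  · intro p
    induction p using Polynomial.induction_on' with
    | add p q hp hq =>
      obtain ⟨a, ha⟩ := hp; obtain ⟨b, hb⟩ := hq
      exact ⟨a + b, by rw [map_add, ha, hb]⟩
    | monomial n a =>
      refine ⟨a • fδ (Multiset.replicate n BTree.leaf), ?_⟩
      rw [map_smul, φ_fδ']
      have h1 : forestLeafCount (Multiset.replicate n BTree.leaf) = n := by
        simp [forestLeafCount, Multiset.map_replicate, BTree.leafCount]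
      rw [h1, Polynomial.smul_X_eq_monomial]
  · rw [φ_eq]; exact map_one φA
  · intro x y; rw [φ_eq]; exact map_mul φA x y
  · have key : (TensorProduct.map φ φ) ∘ₗ ΔH = Δpoly.toLinearMap ∘ₗ φ := by
      refine AddMonoidAlgebra.lhom_ext' fun m => LinearMap.ext fun b => ?_
      simp only [LinearMap.coe_comp, Function.comp_apply, AddMonoidAlgebra.lsingle_apply]
      have hΔ : ΔH (AddMonoidAlgebra.single m b) = b • forestDelta m := by
        change (Finsupp.lift (V ⊗[ℚ] V) ℚ (Multiset BTree) forestDelta) (Finsupp.single m b) = _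
        erw [Finsupp.lift_apply, Finsupp.sum_single_index (by simp)]
      simp only [LinearMap.coe_comp, Function.comp_apply, AlgHom.toLinearMap_apply]
      erw [hΔ, φ_single]
      rw [map_smul, map_forestDelta, map_smul, Δpoly_pow]
    intro x
    exact LinearMap.congr_fun key x
  · have key : (Polynomial.lcoeff ℚ 0) ∘ₗ φ = εH := by
      refine AddMonoidAlgebra.lhom_ext' fun m => LinearMap.ext fun b => ?_
      simp only [LinearMap.coe_comp, Function.comp_apply]
      simp only [AddMonoidAlgebra.lsingle_apply]
      erw [φ_single]
      change _ = Finsupp.lift ℚ ℚ (Multiset BTree) (fun m => if m = 0 then 1 else 0)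
        (Finsupp.single m b)
      erw [Finsupp.lift_apply, Finsupp.sum_single_index (by simp)]
      rw [map_smul, Polynomial.lcoeff_apply, Polynomial.coeff_X_pow]
      by_cases hm : m = 0
      · subst hm
        simp [forestLeafCount]
      · have hn : forestLeafCount m ≠ 0 := fun h => hm (forestLeafCount_eq_zero.1 h)
        simp [hm, hn, Ne.symm hn]
    intro x
    rw [← Polynomial.coeff_zero_eq_eval_zero]
    exact LinearMap.congr_fun key x

end
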